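/- Let k ≥ 1 and L_m = {c} ∪ {x₁⋯x_{(k+1)m} | x_i ∈ {a,bb}, and the number of a-blocks is a multiple of k+1} over {a,b,c}. In any k-limited propagating tabled 0L system generating L_m in which some table contains the rule a→bb, there is a derivable word not in L_m; hence every table's rules for a must be a→a only, and consequently all words of L_m \ {c} must be derived directly from the axiom c, requiring more than m rules. -/

import Mathlib

/-- One k-limited derivation step: for each letter x, exactly min(k, |v|_x) occurrences
of x in v are rewritten, each by some rule of R with left side x; the remaining
occurrences stay unchanged. -/
def klStep {V : Type*} [DecidableEq V] (k : ℕ) (R : Set (V × List V)) (v w : List V) : Prop :=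
  ∃ (S : Finset (Fin v.length)) (f : Fin v.length → List V),
    (∀ x : V, (S.filter (fun i => v.get i = x)).card = min k (v.count x)) ∧
    (∀ i ∈ S, (v.get i, f i) ∈ R) ∧
    (∀ i, i ∉ S → f i = [v.get i]) ∧
    w = (List.ofFn f).flatten

/-- Deterministic k-limited step with rule function P. -/
def detStep {V : Type*} [DecidableEq V] (k : ℕ) (P : V → List V) : List V → List V → Prop :=
  klStep k {p | p.2 = P p.1}

/-- The language generated from axiom ω by a step relation. -/
def lang {V : Type*} (step : List V → List V → Prop) (ω : List V) : Set (List V) :=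
  {w | Relation.ReflTransGen step ω w}

inductive V3 : Type
  | a | b | c
deriving DecidableEq

instance : Fintype V3 :=
  ⟨{V3.a, V3.b, V3.c}, fun x => by cases x <;> simp⟩

open V3

/-- L_m = {c} ∪ {x₁⋯x_{(k+1)m} | xᵢ ∈ {a,bb}, number of a-blocks a multiple of k+1}. -/
def Lm (k m : ℕ) : Set (List V3) :=
  {[c]} ∪ {z | ∃ bs : List (List V3),
    bs.length = (k + 1) * m ∧ (∀ x ∈ bs, x = [a] ∨ x = [b, b]) ∧
    (∃ j ≤ m, bs.count [a] = (k + 1) * j) ∧ z = bs.flatten}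

/- ## Auxiliary lemmas -/

lemma card_filter_lt_univ (L k : ℕ) (h : k ≤ L) :
    ((Finset.univ : Finset (Fin L)).filter (fun i : Fin L => (i:ℕ) < k)).card = k := by
  have : (Finset.univ : Finset (Fin L)).filter (fun i : Fin L => (i:ℕ) < k)
      = Finset.map (Fin.castLEEmb h) Finset.univ := by
    ext i
    simp only [Finset.mem_filter, Finset.mem_univ, true_and, Finset.mem_map,
      Fin.castLEEmb_apply]
    constructor
    · intro hi; exact ⟨⟨i, hi⟩, rfl⟩
    · rintro ⟨j, rfl⟩; exact j.isLt
  rw [this, Finset.card_map, Finset.card_univ, Fintype.card_fin]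

lemma count_a_flatten (bs : List (List V3)) (h : ∀ x ∈ bs, x = [a] ∨ x = [b, b]) :
    bs.flatten.count a = bs.count [a] := by
  induction bs with
  | nil => rfl
  | cons x t ih =>
    have hx := h x (by simp)
    have ht := ih (fun y hy => h y (by simp [hy]))
    rcases hx with rfl | rfl <;>
      simp [List.count_cons, List.count_append, ht]

lemma c_not_mem_flatten (bs : List (List V3)) (h : ∀ x ∈ bs, x = [a] ∨ x = [b, b]) :
    c ∉ bs.flatten := by
  induction bs with
  | nil => simp
  | cons x t ih =>
    have hx := h x (by simp)
    have ht := ih (fun y hy => h y (by simp [hy]))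
    rcases hx with rfl | rfl <;> simp [ht]

lemma flatten_replicate_singleton (n : ℕ) (x : V3) :
    (List.replicate n [x]).flatten = List.replicate n x := by
  induction n with
  | zero => rfl
  | succ n ih => simp [List.replicate_succ, ih]

lemma map_singleton_flatten {V : Type*} (l : List V) :
    (l.map (fun x => [x])).flatten = l := by
  induction l with
  | nil => rfl
  | cons x t ih => simp [ih]

/-- A k-limited step from a singleton word applies a single rule to the letter. -/
lemma klStep_singleton {V : Type*} [DecidableEq V] {k : ℕ} (hk : 1 ≤ k)
    {R : Set (V × List V)} {x : V} {z : List V} (h : klStep k R [x] z) : (x, z) ∈ R := by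
  obtain ⟨S, f, hcard, hS, _, hz⟩ := h
  have hget : ∀ i : Fin ([x] : List V).length, ([x] : List V).get i = x := by
    rintro ⟨i, hi⟩
    match i, hi with
    | 0, _ => rfl
  have hcount : ([x] : List V).count x = 1 := by simp
  have hScard : S.card = 1 := by
    have := hcard x
    rw [hcount, Nat.min_eq_right hk, Finset.filter_true_of_mem (fun i _ => hget i)] at this
    exact this
  obtain ⟨i0, hi0⟩ := Finset.card_eq_one.mp hScard
  have hmem : i0 ∈ S := by rw [hi0]; exact Finset.mem_singleton_self i0
  have hrule := hS i0 hmem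
  rw [hget i0] at hrule
  have hi0eq : i0 = ⟨0, by simp⟩ := by
    apply Fin.ext
    have := i0.isLt
    simp at this
    simp [this]
  have hofFn : (List.ofFn f) = [f i0] := by
    apply List.ext_getElem
    · simp
    · intro n h1 h2
      have hn : n = 0 := by simp at h2; omega
      subst hn
      rw [List.getElem_ofFn]
      have : (⟨0, h1⟩ : Fin (List.ofFn f).length) = ⟨0, by simp⟩ := rfl
      show f _ = f i0
      exact congrArg f (Fin.ext (by rw [hi0eq]))
  rw [hofFn] at hz
  simp at hz
  rw [hz]
  exact hrule

/-- If a word contains no `c` and all applicable rules are `a→a`, `b→b`,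
then any k-limited step is the identity. -/
lemma klStep_id {k : ℕ} {T : Finset (V3 × List V3)}
    (hT : ∀ p ∈ T, (p.1 = b → p.2 = [b]) ∧ (p.1 = a → p.2 = [a] ∨ p.2 = [b, b]))
    (hnab : (a, [b, b]) ∉ T)
    {v w : List V3} (hc : c ∉ v) (h : klStep k (↑T : Set (V3 × List V3)) v w) : w = v := by
  obtain ⟨S, f, _, hS, hnS, hw⟩ := h
  have hf : ∀ i, f i = [v.get i] := by
    intro i
    by_cases hi : i ∈ S
    · have hrule : (v.get i, f i) ∈ T := hS i hi
      have hmemv : v.get i ∈ v := v.get_mem i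
      cases hv : v.get i with
      | a =>
        rw [hv] at hrule
        rcases (hT _ hrule).2 rfl with h1 | h1
        · exact h1
        · have h1' : f i = [b, b] := h1
          exact absurd (h1' ▸ hrule) hnab
      | b =>
        rw [hv] at hrule
        exact (hT _ hrule).1 rfl
      | c => exact absurd (hv ▸ hmemv) hc
    · exact hnS i hi
  have : List.ofFn f = v.map (fun x => [x]) := by
    rw [funext hf]
    rw [show (fun i => [v.get i]) = ((fun x : V3 => [x]) ∘ v.get) from rfl]
    rw [← List.map_ofFn, List.ofFn_get]
  rw [hw, this, map_singleton_flatten]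

/-- In any kℓPT0L system generating L_m whose tables rewrite b only to b and a only to
a or bb, no table may contain the rule a→bb (it would derive a word outside L_m);
consequently all words of L_m \ {c} are derived directly from the axiom c, and the
system has more than m rules. -/
theorem stmt14 (k m : ℕ) (hk : 1 ≤ k) (hm : 1 ≤ m)
    (Tbls : Finset (Finset (V3 × List V3)))
    (hcomplete : ∀ T ∈ Tbls, ∀ x : V3, ∃ w, (x, w) ∈ T)
    (htab : ∀ T ∈ Tbls, ∀ p ∈ T,
      (p.1 = b → p.2 = [b]) ∧ (p.1 = a → p.2 = [a] ∨ p.2 = [b, b]))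
    (hgen : lang (fun u v => ∃ T ∈ Tbls, klStep k (↑T : Set (V3 × List V3)) u v) [c]
      = Lm k m) :
    (∀ T ∈ Tbls, (a, [b, b]) ∉ T) ∧
    (∀ z ∈ Lm k m, z ≠ [c] → ∃ T ∈ Tbls, klStep k (↑T : Set (V3 × List V3)) [c] z) ∧
    m < ∑ T ∈ Tbls, T.card := by
  classical
  set step := (fun u v => ∃ T ∈ Tbls, klStep k (↑T : Set (V3 × List V3)) u v) with hstepdef
  have hmem : ∀ z, Relation.ReflTransGen step [c] z ↔ z ∈ Lm k m := by
    intro z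
    constructor
    · intro h; rw [← hgen]; exact h
    · intro h; rw [← hgen] at h; exact h
  set N := (k + 1) * m with hN
  have hkN : k ≤ N := by
    have : k + 1 ≤ (k + 1) * m := Nat.le_mul_of_pos_right _ hm
    omega
  -- a^N ∈ Lm
  have haN : List.replicate N a ∈ Lm k m := by
    right
    refine ⟨List.replicate N [a], by simp [hN], ?_, ⟨m, le_refl m, by simp [hN]⟩, ?_⟩
    · intro x hx
      left
      exact (List.eq_of_mem_replicate hx)
    · rw [flatten_replicate_singleton]
  -- Part 1
  have part1 : ∀ T ∈ Tbls, (a, [b, b]) ∉ T := by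
    intro T hT hab
    set v := List.replicate N a with hv
    have hvlen : v.length = N := by simp [hv]
    have hvget : ∀ i : Fin v.length, v.get i = a := by
      intro i
      simp [hv]
    set S : Finset (Fin v.length) := Finset.univ.filter (fun i => (i:ℕ) < k) with hSdef
    have hScard : S.card = k := by
      rw [hSdef]
      exact card_filter_lt_univ v.length k (by omega)
    set f : Fin v.length → List V3 := fun i => if (i:ℕ) < k then [b, b] else [a] with hfdef
    set w' := (List.ofFn f).flatten with hw'
    have hstep : klStep k (↑T : Set (V3 × List V3)) v w' := by
      refine ⟨S, f, ?_, ?_, ?_, rfl⟩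
      · intro x
        cases x with
        | a =>
          rw [Finset.filter_true_of_mem (fun i _ => hvget i)]
          rw [hScard]
          have : v.count a = N := by simp [hv]
          rw [this, Nat.min_eq_left hkN]
        | b =>
          have h1 : S.filter (fun i => v.get i = b) = ∅ := by
            apply Finset.filter_eq_empty_iff.mpr
            intro i _
            rw [hvget i]; simp
          have h2 : v.count b = 0 := by simp [hv, List.count_replicate]
          rw [h1, h2]; simp
        | c =>
          have h1 : S.filter (fun i => v.get i = c) = ∅ := by
            apply Finset.filter_eq_empty_iff.mpr
            intro i _
            rw [hvget i]; simp
          have h2 : v.count c = 0 := by simp [hv, List.count_replicate]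
          rw [h1, h2]; simp
      · intro i hi
        have hik : (i:ℕ) < k := by
          rw [hSdef] at hi
          simpa using hi
        rw [hvget i]
        have : f i = [b, b] := by rw [hfdef]; simp [hik]
        rw [this]
        exact hab
      · intro i hi
        have hik : ¬ (i:ℕ) < k := by
          rw [hSdef] at hi
          simpa using hi
        rw [hvget i]
        rw [hfdef]; simp [hik]
    have hw'mem : w' ∈ Lm k m := by
      rw [← hmem]
      exact Relation.ReflTransGen.tail ((hmem _).mpr haN) ⟨T, hT, hstep⟩
    -- count of a in w'
    have hcount : w'.count a = N - k := by
      rw [hw', List.count_flatten, List.map_ofFn, List.sum_ofFn]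
      have heach : ∀ i : Fin v.length,
          (List.count a ∘ f) i = if (i:ℕ) < k then 0 else 1 := by
        intro i
        by_cases h : (i:ℕ) < k <;> simp [hfdef, h]
      rw [Finset.sum_congr rfl (fun i _ => heach i)]
      rw [Finset.sum_ite, Finset.sum_const, Finset.sum_const]
      simp only [smul_eq_mul, mul_zero, mul_one, zero_add]
      rw [Finset.filter_not, Finset.card_sdiff_of_subset (Finset.filter_subset _ _)]
      rw [Finset.card_univ, Fintype.card_fin, hvlen]
      congr 1
      exact card_filter_lt_univ N k hkN
    rcases hw'mem with h1 | ⟨bs, hbslen, hbsblocks, ⟨j, hj, hbscount⟩, hbs⟩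
    · -- w' = [c] is impossible: count a w' = N - k ≥ 1
      have : w'.count a = 0 := by
        rw [Set.mem_singleton_iff.mp h1]; simp
      have hNk : 1 ≤ N - k := by
        have : k + 1 ≤ N := Nat.le_mul_of_pos_right _ hm
        omega
      omega
    · have hca : w'.count a = (k + 1) * j := by
        rw [hbs, count_a_flatten bs hbsblocks, hbscount]
      have heq : (k + 1) * j + k = (k + 1) * m := by
        rw [hca] at hcount
        omega
      have hjm : j ≤ m := hj
      have hdvd : (k + 1) ∣ k := by
        refine ⟨m - j, ?_⟩
        rw [Nat.mul_sub]
        omega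
      have := Nat.le_of_dvd (by omega) hdvd
      omega
  -- Part 2
  have part2 : ∀ z ∈ Lm k m, z ≠ [c] →
      ∃ T ∈ Tbls, klStep k (↑T : Set (V3 × List V3)) [c] z := by
    intro z hz hne
    have hder : Relation.ReflTransGen step [c] z := (hmem z).mpr hz
    clear hz
    induction hder with
    | refl => exact absurd rfl hne
    | @tail v znew h hst ih =>
      by_cases hv : v = [c]
      · rw [hv] at hst
        exact hst
      · -- v ∈ Lm, v ≠ [c], so step v → znew is identity
        have hvmem : v ∈ Lm k m := (hmem v).mp h
        rcases hvmem with h1 | ⟨bs, _, hbsblocks, _, hbsflat⟩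
        · exact absurd (Set.mem_singleton_iff.mp h1) hv
        · have hcv : c ∉ v := by
            rw [hbsflat]
            exact c_not_mem_flatten bs hbsblocks
          obtain ⟨T, hT, hTstep⟩ := hst
          have : znew = v := klStep_id (htab T hT) (part1 T hT) hcv hTstep
          rw [this] at hne ⊢
          exact ih hne
  -- Part 3
  have part3 : m < ∑ T ∈ Tbls, T.card := by
    set wfun : Fin (m + 1) → List V3 := fun j =>
      (List.replicate ((k + 1) * (j:ℕ)) [a] ++
        List.replicate ((k + 1) * (m - (j:ℕ))) [b, b]).flatten with hwfun
    have hblocks : ∀ j : Fin (m + 1), ∀ x ∈ (List.replicate ((k + 1) * (j:ℕ)) [a] ++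
        List.replicate ((k + 1) * (m - (j:ℕ))) [b, b]), x = [a] ∨ x = [b, b] := by
      intro j x hx
      rw [List.mem_append] at hx
      rcases hx with hx | hx
      · left; exact List.eq_of_mem_replicate hx
      · right; exact List.eq_of_mem_replicate hx
    have hwmem : ∀ j : Fin (m + 1), wfun j ∈ Lm k m := by
      intro j
      right
      refine ⟨_, ?_, hblocks j, ⟨j, by omega, ?_⟩, rfl⟩
      · rw [List.length_append, List.length_replicate, List.length_replicate,
          ← Nat.mul_add]
        congr 1
        omega
      · rw [List.count_append]
        simp [List.count_replicate]
    have hwne : ∀ j : Fin (m + 1), wfun j ≠ [c] := by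
      intro j heq
      have := c_not_mem_flatten _ (hblocks j)
      rw [hwfun] at heq
      simp only at heq
      rw [heq] at this
      simp at this
    have hwcount : ∀ j : Fin (m + 1), (wfun j).count a = (k + 1) * (j:ℕ) := by
      intro j
      rw [hwfun]
      simp only
      rw [count_a_flatten _ (hblocks j), List.count_append]
      simp [List.count_replicate]
    have hwinj : Function.Injective wfun := by
      intro j1 j2 hj
      have : (k + 1) * (j1:ℕ) = (k + 1) * (j2:ℕ) := by
        rw [← hwcount j1, ← hwcount j2, hj]
      have : (j1:ℕ) = (j2:ℕ) := Nat.eq_of_mul_eq_mul_left (by omega) this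
      exact Fin.ext this
    have hrule : ∀ j : Fin (m + 1), ∃ T ∈ Tbls, (c, wfun j) ∈ T := by
      intro j
      obtain ⟨T, hT, hTstep⟩ := part2 (wfun j) (hwmem j) (hwne j)
      exact ⟨T, hT, klStep_singleton hk hTstep⟩
    set R : Finset (V3 × List V3) :=
      Finset.univ.image (fun j : Fin (m + 1) => ((c : V3), wfun j)) with hR
    have hRcard : R.card = m + 1 := by
      rw [hR, Finset.card_image_of_injective _
        (fun j1 j2 hj => hwinj (by injection hj)), Finset.card_univ, Fintype.card_fin]
    have hRsub : R ⊆ Tbls.biUnion id := by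
      intro p hp
      rw [hR, Finset.mem_image] at hp
      obtain ⟨j, _, rfl⟩ := hp
      obtain ⟨T, hT, hpT⟩ := hrule j
      rw [Finset.mem_biUnion]
      exact ⟨T, hT, hpT⟩
    have h1 : m + 1 ≤ (Tbls.biUnion id).card := by
      rw [← hRcard]
      exact Finset.card_le_card hRsub
    have h2 : (Tbls.biUnion id).card ≤ ∑ T ∈ Tbls, (id T).card :=
      Finset.card_biUnion_le
    simp only [id] at h2
    omega
  exact ⟨part1, part2, part3⟩
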